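/- The series ∑_{k≥0} (-1)^k a^{2k} Γ((n+2k)/β) / (Γ(k+1) Γ(k+n/2)) converges absolutely for every real a, every positive integer n, and every real β > 1. -/
import Mathlib


open Real

lemma stmt_0_aux (N K : ℝ) (hN : 1 ≤ N) (hK : 1 ≤ K) :
    (N + 2 * K) * (N + 2 * K + 1) ≤ ((N + 3) * K) ^ 2 := by
  have hK2 : (0:ℝ) ≤ K ^ 2 - K := by nlinarith
  have hK21 : (0:ℝ) ≤ K ^ 2 - 1 := by nlinarith
  nlinarith [mul_nonneg (sq_nonneg N) hK21, mul_nonneg (by linarith : (0:ℝ) ≤ N) hK2,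
    mul_nonneg (by linarith : (0:ℝ) ≤ N) hK21,
    mul_nonneg (by linarith : (0:ℝ) ≤ N) (sq_nonneg K), sq_nonneg K]

lemma stmt_0_aux2 (N K G : ℝ) (hN : 1 ≤ N) (hK : 1 ≤ K) (hG : 0 ≤ G) :
    G * (1/2 * K ^ 2) ≤ 1/2 * ((K + 1) * (K + N/2)) * G := by
  have h : (0:ℝ) ≤ (K + 1) * (K + N/2) - K ^ 2 := by nlinarith
  nlinarith [mul_nonneg hG h]

set_option maxHeartbeats 1000000 in
theorem stmt_0 (a : ℝ) (n : ℕ) (hn : 0 < n) (β : ℝ) (hβ : 1 < β) :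
    Summable (fun k : ℕ =>
      |(-1 : ℝ) ^ k * a ^ (2 * k) * Real.Gamma ((n + 2 * k) / β) /
        (Real.Gamma (k + 1) * Real.Gamma (k + n / 2))|) := by
  have hβ0 : (0:ℝ) < β := lt_trans one_pos hβ
  have hn' : (0:ℝ) < n := by exact_mod_cast hn
  have hn1 : (1:ℝ) ≤ n := by exact_mod_cast hn
  have habs : ∀ m : ℕ, |(-1 : ℝ) ^ m * a ^ (2 * m) * Real.Gamma ((n + 2 * m) / β) /
      (Real.Gamma (m + 1) * Real.Gamma (m + n / 2))| =
      a ^ (2 * m) * Real.Gamma ((n + 2 * m) / β) /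
      (Real.Gamma (m + 1) * Real.Gamma (m + n / 2)) := by
    intro m
    have h1 : 0 < Real.Gamma (((n:ℝ) + 2 * m) / β) := by
      apply Real.Gamma_pos_of_pos
      apply div_pos _ hβ0
      have : (0:ℝ) ≤ (m:ℝ) := Nat.cast_nonneg m
      linarith
    have h2 : 0 < Real.Gamma ((m:ℝ) + 1) := by
      apply Real.Gamma_pos_of_pos
      have : (0:ℝ) ≤ (m:ℝ) := Nat.cast_nonneg m
      linarith
    have h3 : 0 < Real.Gamma ((m:ℝ) + (n:ℝ) / 2) := by
      apply Real.Gamma_pos_of_pos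
      have : (0:ℝ) ≤ (m:ℝ) := Nat.cast_nonneg m
      linarith
    have ha2 : (0:ℝ) ≤ a ^ (2 * m) := by rw [pow_mul]; positivity
    rw [abs_div, abs_mul, abs_mul, abs_pow, abs_neg, abs_one, one_pow, one_mul,
      abs_of_pos h1, abs_of_pos (mul_pos h2 h3), abs_of_nonneg ha2]
  apply summable_of_ratio_norm_eventually_le (r := 1/2) (by norm_num)
  have hexp : 0 < 2 - 2/β := by
    have : 2/β < 2 := by rw [div_lt_iff₀ hβ0]; nlinarith
    linarith
  have hev : ∀ᶠ k : ℕ in Filter.atTop,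
      2 * a ^ 2 * ((n:ℝ) + 3) ^ (2/β) ≤ (k:ℝ) ^ (2 - 2/β) := by
    have := (tendsto_rpow_atTop hexp).comp (tendsto_natCast_atTop_atTop (R := ℝ))
    exact this.eventually_ge_atTop _
  filter_upwards [hev, Filter.eventually_ge_atTop 1] with k hk hk1
  rw [Real.norm_eq_abs, Real.norm_eq_abs, abs_abs, abs_abs, habs, habs]
  have hK1 : (1:ℝ) ≤ (k:ℝ) := by exact_mod_cast hk1
  have hK0 : (0:ℝ) < (k:ℝ) := lt_of_lt_of_le one_pos hK1
  set K := (k:ℝ) with hK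
  set y := ((n:ℝ) + 2 * K) / β with hy_def
  clear_value K y
  have hy : 0 < y := by rw [hy_def]; exact div_pos (by linarith) hβ0
  have h2β : (0:ℝ) < 2/β := by positivity
  have hΓy : 0 < Real.Gamma y := Real.Gamma_pos_of_pos hy
  have hΓy2 : 0 < Real.Gamma (y + 2/β) := Real.Gamma_pos_of_pos (by linarith)
  have hΓP : 0 < Real.Gamma (K + 1) := Real.Gamma_pos_of_pos (by linarith)
  have hΓQ : 0 < Real.Gamma (K + (n:ℝ)/2) := Real.Gamma_pos_of_pos (by linarith)
  -- log-convexity bound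
  have hconv : Real.Gamma (y + 2/β) ≤ Real.Gamma y * (y * (y + 1)) ^ (1/β) := by
    have hb1 : 0 < 1/β := by positivity
    have ha1 : 0 < 1 - 1/β := by
      have : 1/β < 1 := (div_lt_one hβ0).mpr hβ
      linarith
    have happ := Real.Gamma_mul_add_mul_le_rpow_Gamma_mul_rpow_Gamma hy
      (by linarith : (0:ℝ) < y + 2) ha1 hb1 (by ring)
    have harg : (1 - 1/β) * y + (1/β) * (y + 2) = y + 2/β := by ring
    rw [harg] at happ
    have hstep : Real.Gamma (y + 2) = y * (y + 1) * Real.Gamma y := by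
      rw [show y + 2 = (y + 1) + 1 by ring, Real.Gamma_add_one (by linarith),
        Real.Gamma_add_one (ne_of_gt hy)]
      ring
    calc Real.Gamma (y + 2/β) ≤ Real.Gamma y ^ (1 - 1/β) * Real.Gamma (y + 2) ^ (1/β) := happ
      _ = Real.Gamma y * (y * (y + 1)) ^ (1/β) := by
          rw [hstep, Real.mul_rpow (by nlinarith [hy] : (0:ℝ) ≤ y * (y + 1)) hΓy.le, ← mul_assoc,
            mul_comm (Real.Gamma y ^ (1 - 1/β)), mul_assoc,
            ← Real.rpow_add hΓy, show (1 - 1/β) + 1/β = 1 by ring, Real.rpow_one, mul_comm]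
  -- polynomial bound on y(y+1)
  have hyle : y ≤ (n:ℝ) + 2 * K := by
    rw [hy_def, div_le_iff₀ hβ0]
    nlinarith
  have hyK1 : y * (y + 1) ≤ ((n:ℝ) + 2 * K) * ((n:ℝ) + 2 * K + 1) := by
    nlinarith [mul_nonneg (sub_nonneg.mpr hyle) (show (0:ℝ) ≤ (n:ℝ) + 2 * K + y + 1 by linarith)]
  have hyK : y * (y + 1) ≤ (((n:ℝ) + 3) * K) ^ 2 :=
    le_trans hyK1 (stmt_0_aux _ _ hn1 hK1)
  have hr2 : (y * (y + 1)) ^ (1/β) ≤ ((n:ℝ) + 3) ^ (2/β) * K ^ (2/β) := by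
    calc (y * (y + 1)) ^ (1/β) ≤ ((((n:ℝ) + 3) * K) ^ 2) ^ (1/β) :=
          Real.rpow_le_rpow (by nlinarith [hy]) hyK (by positivity)
      _ = (((n:ℝ) + 3) * K) ^ ((2:ℝ) * (1/β)) := by
          rw [← Real.rpow_natCast (((n:ℝ) + 3) * K) 2,
            ← Real.rpow_mul (by nlinarith [hK0] : (0:ℝ) ≤ ((n:ℝ) + 3) * K)]
          norm_num
      _ = (((n:ℝ) + 3) * K) ^ (2/β) := by rw [mul_one_div]
      _ = ((n:ℝ) + 3) ^ (2/β) * K ^ (2/β) := Real.mul_rpow (by positivity) hK0.le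
  -- main numeric bound
  have hKpow : K ^ (2 - 2/β) * K ^ (2/β) = K ^ 2 := by
    rw [← Real.rpow_add hK0, show (2 - 2/β) + 2/β = (2:ℝ) by ring, Real.rpow_two]
  have hnum : a ^ 2 * (((n:ℝ) + 3) ^ (2/β) * K ^ (2/β)) ≤ 1/2 * K ^ 2 := by
    have h1 : (2 * a ^ 2 * ((n:ℝ) + 3) ^ (2/β)) * K ^ (2/β) ≤ K ^ (2 - 2/β) * K ^ (2/β) :=
      mul_le_mul_of_nonneg_right hk (Real.rpow_nonneg hK0.le _)
    rw [hKpow] at h1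
    linarith [h1]
  have hmain : a ^ 2 * Real.Gamma (y + 2/β) ≤
      1/2 * ((K + 1) * (K + (n:ℝ)/2)) * Real.Gamma y := by
    calc a ^ 2 * Real.Gamma (y + 2/β)
        ≤ a ^ 2 * (Real.Gamma y * (y * (y + 1)) ^ (1/β)) :=
          mul_le_mul_of_nonneg_left hconv (sq_nonneg a)
      _ = Real.Gamma y * (a ^ 2 * (y * (y + 1)) ^ (1/β)) := by ring
      _ ≤ Real.Gamma y * (a ^ 2 * (((n:ℝ) + 3) ^ (2/β) * K ^ (2/β))) := by
          apply mul_le_mul_of_nonneg_left _ hΓy.le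
          exact mul_le_mul_of_nonneg_left hr2 (sq_nonneg a)
      _ ≤ Real.Gamma y * (1/2 * K ^ 2) := mul_le_mul_of_nonneg_left hnum hΓy.le
      _ ≤ 1/2 * ((K + 1) * (K + (n:ℝ)/2)) * Real.Gamma y :=
          stmt_0_aux2 _ _ _ hn1 hK1 hΓy.le
  -- now rewrite the goal
  have hcast1 : ((k:ℕ) + 1 : ℕ) = k + 1 := rfl
  push_cast
  rw [← hK]
  have harg : ((n:ℝ) + 2 * (K + 1)) / β = y + 2/β := by rw [hy_def]; ring
  have hGP : Real.Gamma (K + 1 + 1) = (K + 1) * Real.Gamma (K + 1) :=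
    Real.Gamma_add_one (ne_of_gt (by linarith : (0:ℝ) < K + 1))
  have hGQ : Real.Gamma (K + 1 + (n:ℝ)/2) = (K + (n:ℝ)/2) * Real.Gamma (K + (n:ℝ)/2) := by
    rw [show K + 1 + (n:ℝ)/2 = (K + (n:ℝ)/2) + 1 by ring,
      Real.Gamma_add_one (ne_of_gt (by linarith : (0:ℝ) < K + (n:ℝ)/2))]
  have hpow : a ^ (2 * (k + 1)) = a ^ (2 * k) * a ^ 2 := by
    rw [show 2 * (k + 1) = 2 * k + 2 by ring, pow_add]
  rw [harg, hGP, hGQ, hpow]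
  have ha2k : (0:ℝ) ≤ a ^ (2 * k) := by rw [pow_mul]; positivity
  rw [← mul_div_assoc, div_le_div_iff₀
    (mul_pos (mul_pos (by linarith : (0:ℝ) < K + 1) hΓP)
      (mul_pos (by linarith : (0:ℝ) < K + (n:ℝ)/2) hΓQ))
    (mul_pos hΓP hΓQ)]
  have hfin := mul_le_mul_of_nonneg_left hmain
    (mul_nonneg (mul_nonneg ha2k hΓP.le) hΓQ.le)
  linarith [hfin]
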